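/- Let f ∈ C^α([a,b]) be α-Hölder continuous with 0 < α < 1. Then for any 0 < β < α with β ∉ ℕ, if the local fractional derivative f^{(β+)}(x) := lim_{y→x⁺} C_{x⁺}^β f(y) exists at x, then f^{(β+)}(x) = 0. -/

import Mathlib

open Filter Topology MeasureTheory intervalIntegral

/-- Left Caputo fractional derivative of order `β ∈ (0,1)` with base point `a`. -/
noncomputable def caputo (β a : ℝ) (f : ℝ → ℝ) (x : ℝ) : ℝ :=
  deriv (fun y => (Real.Gamma (1 - β))⁻¹ * ∫ t in a..y, (f t - f a) * (y - t) ^ (-β)) x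

/-- If `f` is `α`-Hölder continuous on `[a,b]` and `0 < β < α` with `β ∉ ℕ`, then the local
fractional derivative `f^{(β+)}(x) = lim_{y→x⁺} C_{x⁺}^β f(y)`, when it exists, is zero. -/
theorem local_fractional_derivative_zero_of_holder
    (α β a b : ℝ) (hα0 : 0 < α) (hα1 : α < 1) (hβ0 : 0 < β) (hβα : β < α)
    (hβnat : ∀ n : ℕ, β ≠ (n : ℝ))
    (f : ℝ → ℝ) (C : ℝ)
    (hHolder : ∀ x ∈ Set.Icc a b, ∀ y ∈ Set.Icc a b, |f x - f y| ≤ C * |x - y| ^ α)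
    (x : ℝ) (hx : x ∈ Set.Ico a b) (L : ℝ)
    (hlim : Tendsto (caputo β x f) (𝓝[>] x) (𝓝 L)) :
    L = 0 := by
  by_contra hL
  obtain ⟨hxa, hxb⟩ := hx
  have hβ1 : β < 1 := hβα.trans hα1
  set g : ℝ → ℝ := fun y => (Real.Gamma (1 - β))⁻¹ * ∫ t in x..y, (f t - f x) * (y - t) ^ (-β)
    with hgdef
  have hcap : caputo β x f = deriv g := rfl
  have hΓpos : 0 < Real.Gamma (1 - β) := Real.Gamma_pos_of_pos (by linarith)
  have hxmem : x ∈ Set.Icc a b := ⟨hxa, hxb.le⟩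
  have hbmem : b ∈ Set.Icc a b := ⟨hxa.trans hxb.le, le_refl b⟩
  -- C is nonnegative
  have hC : 0 ≤ C := by
    have h1 := hHolder x hxmem b hbmem
    have h2 : (0:ℝ) < |x - b| ^ α := Real.rpow_pos_of_pos (abs_pos.mpr (by linarith)) α
    nlinarith [abs_nonneg (f x - f b)]
  -- continuity of f on [a,b]
  have hfc : ContinuousOn f (Set.Icc a b) := by
    intro t₀ ht₀
    have h1 : Tendsto (fun t => C * |t - t₀| ^ α) (𝓝[Set.Icc a b] t₀) (𝓝 (C * |t₀ - t₀| ^ α)) := by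
      apply Tendsto.mono_left _ nhdsWithin_le_nhds
      exact (tendsto_const_nhds.mul
        (((continuous_abs.comp (continuous_id.sub continuous_const)).tendsto t₀).comp
          tendsto_id |>.rpow_const (Or.inr hα0.le)))
    rw [sub_self, abs_zero, Real.zero_rpow hα0.ne', mul_zero] at h1
    have h2 : Tendsto (fun t => f t - f t₀) (𝓝[Set.Icc a b] t₀) (𝓝 0) := by
      apply squeeze_zero_norm' _ h1
      filter_upwards [self_mem_nhdsWithin] with t ht
      exact hHolder t ht t₀ ht₀
    have := h2.add (tendsto_const_nhds (α := ℝ) (x := f t₀))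
    simpa [ContinuousWithinAt] using this
  -- the constant in the bound
  set M : ℝ := (Real.Gamma (1 - β))⁻¹ * (C / (1 - β)) with hMdef
  have hM : 0 ≤ M := mul_nonneg (inv_nonneg.mpr hΓpos.le) (div_nonneg hC (by linarith))
  -- bound on g
  have hbound : ∀ y, x < y → y ≤ b → |g y| ≤ M * (y - x) ^ (α + (1 - β)) := by
    intro y hxy hyb
    have hyx0 : (0:ℝ) < y - x := by linarith
    have hxyIcc : Set.uIcc x y ⊆ Set.Icc a b := by
      rw [Set.uIcc_of_le hxy.le]
      exact Set.Icc_subset_Icc hxa (by linarith)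
    -- integrability of the kernel
    have hker : IntervalIntegrable (fun t => (y - t) ^ (-β)) MeasureTheory.volume x y := by
      have h1 : IntervalIntegrable (fun s : ℝ => s ^ (-β)) MeasureTheory.volume 0 (y - x) :=
        intervalIntegrable_rpow' (by linarith)
      have h2 := (h1.comp_sub_left y).symm
      simpa using h2
    have hint : IntervalIntegrable (fun t => (f t - f x) * (y - t) ^ (-β))
        MeasureTheory.volume x y :=
      hker.continuousOn_mul ((hfc.sub continuousOn_const).mono hxyIcc)
    -- the comparison function
    have hcomp : IntervalIntegrable (fun t => C * (y - x) ^ α * (y - t) ^ (-β))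
        MeasureTheory.volume x y := hker.const_mul _
    have hle : ‖∫ t in x..y, (f t - f x) * (y - t) ^ (-β)‖ ≤
        |∫ t in x..y, C * (y - x) ^ α * (y - t) ^ (-β)| := by
      apply intervalIntegral.norm_integral_le_abs_of_norm_le _ hcomp
      have hIoc : Set.uIoc x y = Set.Ioc x y := Set.uIoc_of_le hxy.le
      rw [hIoc]
      filter_upwards [MeasureTheory.ae_restrict_mem measurableSet_Ioc] with t ht
      have hty : (0:ℝ) ≤ (y - t) ^ (-β) := Real.rpow_nonneg (by linarith [ht.2]) _
      rw [Real.norm_eq_abs, abs_mul, abs_of_nonneg hty]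
      apply mul_le_mul_of_nonneg_right _ hty
      have htmem : t ∈ Set.Icc a b := ⟨by linarith [ht.1], by linarith [ht.2]⟩
      calc |f t - f x| ≤ C * |t - x| ^ α := hHolder t htmem x hxmem
        _ ≤ C * (y - x) ^ α := by
            apply mul_le_mul_of_nonneg_left _ hC
            rw [abs_of_nonneg (by linarith [ht.1] : (0:ℝ) ≤ t - x)]
            exact Real.rpow_le_rpow (by linarith [ht.1]) (by linarith [ht.2]) hα0.le
    -- compute the comparison integral
    have hcalc : ∫ t in x..y, (y - t) ^ (-β) = (y - x) ^ (1 - β) / (1 - β) := by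
      have h1 := intervalIntegral.integral_comp_sub_left (a := x) (b := y)
        (fun s : ℝ => s ^ (-β)) y
      simp only [sub_self] at h1
      rw [h1, integral_rpow (Or.inl (by linarith))]
      rw [Real.zero_rpow (by intro h; linarith)]
      ring_nf
    have hval : ∫ t in x..y, C * (y - x) ^ α * (y - t) ^ (-β)
        = C * (y - x) ^ α * ((y - x) ^ (1 - β) / (1 - β)) := by
      rw [intervalIntegral.integral_const_mul, hcalc]
    rw [hval] at hle
    rw [Real.norm_eq_abs] at hle
    have habs : |C * (y - x) ^ α * ((y - x) ^ (1 - β) / (1 - β))|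
        = C * (y - x) ^ α * ((y - x) ^ (1 - β) / (1 - β)) := by
      refine abs_of_nonneg (mul_nonneg (mul_nonneg hC (Real.rpow_nonneg hyx0.le α))
        (div_nonneg (Real.rpow_nonneg hyx0.le (1 - β)) (by linarith)))
    rw [habs] at hle
    have : |g y| = (Real.Gamma (1 - β))⁻¹ * |∫ t in x..y, (f t - f x) * (y - t) ^ (-β)| := by
      rw [hgdef]
      simp [abs_mul, abs_of_nonneg (inv_nonneg.mpr hΓpos.le)]
    rw [this]
    rw [Real.rpow_add hyx0]
    calc (Real.Gamma (1 - β))⁻¹ * |∫ t in x..y, (f t - f x) * (y - t) ^ (-β)|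
        ≤ (Real.Gamma (1 - β))⁻¹ * (C * (y - x) ^ α * ((y - x) ^ (1 - β) / (1 - β))) :=
          mul_le_mul_of_nonneg_left hle (inv_nonneg.mpr hΓpos.le)
      _ = M * ((y - x) ^ α * (y - x) ^ (1 - β)) := by rw [hMdef]; ring
  -- g tends to 0 from the right
  have hIoo : Set.Ioo x b ∈ 𝓝[>] x := Ioo_mem_nhdsGT_of_mem ⟨le_refl x, hxb⟩
  have hrpow0 : Tendsto (fun y => M * (y - x) ^ (α + (1 - β))) (𝓝[>] x) (𝓝 0) := by
    have h1 : Tendsto (fun y : ℝ => y - x) (𝓝[>] x) (𝓝 0) := by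
      apply Tendsto.mono_left _ nhdsWithin_le_nhds
      have := (continuous_id.sub (continuous_const (y := x))).tendsto x
      simpa [Pi.sub_def] using this
    have h2 : ContinuousAt (fun s : ℝ => s ^ (α + (1 - β))) 0 :=
      Real.continuousAt_rpow_const 0 _ (Or.inr (by linarith))
    have h3 := (h2.tendsto.comp h1)
    rw [Real.zero_rpow (by intro h; linarith)] at h3
    simpa using tendsto_const_nhds.mul h3
  have hg0 : Tendsto g (𝓝[>] x) (𝓝 0) := by
    apply squeeze_zero_norm' _ hrpow0
    filter_upwards [hIoo] with y hy
    exact hbound y hy.1 hy.2.le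
  -- eventually the derivative is close to L
  have hLpos : (0:ℝ) < |L| := abs_pos.mpr hL
  have hev : ∀ᶠ y in 𝓝[>] x, |deriv g y - L| < |L| / 2 := by
    have := Metric.tendsto_nhds.mp hlim (|L| / 2) (by positivity)
    filter_upwards [this] with y hy
    rw [hcap] at hy
    simpa [Real.dist_eq] using hy
  -- get an interval where the derivative is close to L
  obtain ⟨u, hu, huIoo⟩ := mem_nhdsGT_iff_exists_Ioo_subset.mp (hev.and hIoo)
  have hu' : x < u := hu
  -- on (x, u), g is differentiable with derivative close to L
  have hdiff : ∀ w ∈ Set.Ioo x u, HasDerivAt g (deriv g w) w := by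
    intro w hw
    have hne : deriv g w ≠ 0 := by
      intro h0
      have := (huIoo hw).1
      rw [h0] at this
      simp only [zero_sub, abs_neg] at this
      linarith
    exact (differentiableAt_of_deriv_ne_zero hne).hasDerivAt
  -- lower bound |g z| ≥ |L|/2 * (z - x) on (x, u)
  have hlower : ∀ z ∈ Set.Ioo x u, |L| / 2 * (z - x) ≤ |g z| := by
    intro z hz
    have hmvt : ∀ᶠ y in 𝓝[>] x, |L| / 2 * (z - y) ≤ |g z - g y| := by
      filter_upwards [Ioo_mem_nhdsGT_of_mem ⟨le_refl x, hz.1⟩] with y hy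
      have hsub : Set.Icc y z ⊆ Set.Ioo x u := fun w hw =>
        ⟨hy.1.trans_le hw.1, lt_of_le_of_lt hw.2 hz.2⟩
      obtain ⟨c, hc, hceq⟩ := exists_hasDerivAt_eq_slope g (deriv g) hy.2
        (fun w hw => ((hdiff w (hsub hw)).differentiableAt).continuousAt.continuousWithinAt)
        (fun w hw => hdiff w (hsub (Set.Ioo_subset_Icc_self hw)))
      have hcmem : c ∈ Set.Ioo x u := hsub (Set.Ioo_subset_Icc_self hc)
      have hcL : |deriv g c - L| < |L| / 2 := (huIoo hcmem).1
      have hcge : |L| / 2 ≤ |deriv g c| := by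
        have := abs_sub_abs_le_abs_sub L (deriv g c)
        rw [abs_sub_comm] at this
        linarith
      have hzy : (0:ℝ) < z - y := by linarith [hy.2]
      have : |g z - g y| = |deriv g c| * (z - y) := by
        rw [hceq, abs_div, abs_of_pos hzy, div_mul_cancel₀]
        exact hzy.ne'
      rw [this]
      exact mul_le_mul_of_nonneg_right hcge hzy.le
    have h1 : Tendsto (fun y => |L| / 2 * (z - y)) (𝓝[>] x) (𝓝 (|L| / 2 * (z - x))) := by
      apply Tendsto.mono_left _ nhdsWithin_le_nhds
      exact tendsto_const_nhds.mul (tendsto_const_nhds.sub tendsto_id)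
    have h2 : Tendsto (fun y => |g z - g y|) (𝓝[>] x) (𝓝 |g z|) := by
      have := (tendsto_const_nhds (x := g z) (f := 𝓝[>] x)).sub hg0
      rw [sub_zero] at this
      exact this.abs
    exact le_of_tendsto_of_tendsto h1 h2 hmvt
  -- conclude
  have hfinal : ∀ᶠ z in 𝓝[>] x, |L| / 2 ≤ M * (z - x) ^ (α - β) := by
    filter_upwards [Ioo_mem_nhdsGT_of_mem ⟨le_refl x, lt_min hu' hxb⟩] with z hz
    have hz1 : z ∈ Set.Ioo x u := ⟨hz.1, hz.2.trans_le (min_le_left _ _)⟩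
    have hz2 : z ≤ b := (hz.2.trans_le (min_le_right _ _)).le
    have hzx : (0:ℝ) < z - x := by linarith [hz.1]
    have h1 := (hlower z hz1).trans (hbound z hz.1 hz2)
    have h2 : (z - x) ^ (α + (1 - β)) = (z - x) ^ (α - β) * (z - x) := by
      rw [show α + (1 - β) = (α - β) + 1 by ring, Real.rpow_add hzx, Real.rpow_one]
    rw [h2, ← mul_assoc] at h1
    exact le_of_mul_le_mul_right h1 hzx
  have htend : Tendsto (fun z => M * (z - x) ^ (α - β)) (𝓝[>] x) (𝓝 0) := by
    have h1 : Tendsto (fun z : ℝ => z - x) (𝓝[>] x) (𝓝 0) := by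
      apply Tendsto.mono_left _ nhdsWithin_le_nhds
      have := (continuous_id.sub (continuous_const (y := x))).tendsto x
      simpa [Pi.sub_def] using this
    have h2 : ContinuousAt (fun s : ℝ => s ^ (α - β)) 0 :=
      Real.continuousAt_rpow_const 0 _ (Or.inr (by linarith))
    have h3 := h2.tendsto.comp h1
    rw [Real.zero_rpow (by intro h; linarith)] at h3
    simpa using tendsto_const_nhds.mul h3
  have : |L| / 2 ≤ 0 := ge_of_tendsto htend hfinal
  linarith
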